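/- Assume L(P_n) = λ_n·P_n for all n ≥ 0. Then for every n ≥ 1 and every k with 1 ≤ k ≤ n, (−1)^{k+1}·δ_n^{(k)} = Σ_{s=1}^{n} Δ_{k,n,s}·s!·a_{s,s}, where a_{s,s} := 0 for s > N. -/
import Mathlib
set_option maxHeartbeats 1000000

/-- `Δ_{k,n,s}(Q)`: the determinant of the `k×k` matrix built from the coefficients
`q m i` of a sequence of monic polynomials, whose `(1,j)`-entry (1-based) is
`[Σ_{t=0}^{j−1} C(n−k+t, s−1)]·q_{n−k+j, n−k}` and whose `(i,j)`-entry for `i ≥ 2`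
is `1` if `j = i−1`, `0` if `j < i−1`, and `q_{n−k+j, n−k+i−1}` if `j ≥ i`. -/
noncomputable def DeltaDet (q : ℕ → ℕ → ℂ) (k n s : ℕ) : ℂ :=
  Matrix.det (Matrix.of fun i j : Fin k =>
    if (i : ℕ) = 0 then
      (∑ t ∈ Finset.range ((j : ℕ) + 1), ((n - k + t).choose (s - 1) : ℂ)) *
        q (n - k + (j : ℕ) + 1) (n - k)
    else if (j : ℕ) + 1 = (i : ℕ) then 1
    else if (j : ℕ) + 1 < (i : ℕ) then 0
    else q (n - k + (j : ℕ) + 1) (n - k + (i : ℕ)))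

lemma detRow_sum' {α : Type*} {k : ℕ} (M : Matrix (Fin k) (Fin k) ℂ)
    (F : Finset α) (v : α → Fin k → ℂ) (j : Fin k) :
    (M.updateRow j (∑ s ∈ F, v s)).det = ∑ s ∈ F, (M.updateRow j (v s)).det := by
  classical
  induction F using Finset.induction_on with
  | empty =>
      simp only [Finset.sum_empty]
      exact Matrix.det_eq_zero_of_row_eq_zero j (fun j' => by simp)
  | @insert s F hs ih =>
      rw [Finset.sum_insert hs, Matrix.det_updateRow_add, ih, Finset.sum_insert hs]

lemma hockey (m s : ℕ) (hs : 1 ≤ s) : ∀ j : ℕ,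
    (∑ t ∈ Finset.range (j + 1), ((m + t).choose (s - 1) : ℂ)) =
      ((m + j + 1).choose s : ℂ) - (m.choose s : ℂ) := by
  obtain ⟨s, rfl⟩ : ∃ s', s = s' + 1 := ⟨s - 1, by omega⟩
  intro j
  induction j with
  | zero =>
      simp [Nat.choose_succ_succ' m s]
  | succ j ih =>
      rw [Finset.sum_range_succ, ih]
      have h1 : (m + (j+1) + 1).choose (s+1)
          = (m + j + 1).choose s + (m + j + 1).choose (s+1) := by
        rw [show m + (j+1) + 1 = (m + j + 1) + 1 by ring, Nat.choose_succ_succ']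
      rw [h1]
      push_cast
      have h2 : m + (j + 1) = m + j + 1 := by ring
      rw [h2]
      push_cast [Nat.add_sub_cancel]
      ring

lemma sum_trunc (c : ℕ → ℂ) (lo h1 h2 : ℕ) (hz1 : ∀ i, h1 < i → c i = 0)
    (hz2 : ∀ i, h2 < i → c i = 0) :
    ∑ i ∈ Finset.Icc lo h1, c i = ∑ i ∈ Finset.Icc lo h2, c i := by
  have e1 : ∑ i ∈ Finset.Icc lo h1, c i = ∑ i ∈ Finset.Icc lo (max h1 h2), c i :=
    Finset.sum_subset (Finset.Icc_subset_Icc_right (le_max_left _ _))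
      (fun x hx hnx => hz1 x (by
        simp only [Finset.mem_Icc] at hx hnx
        omega))
  have e2 : ∑ i ∈ Finset.Icc lo h2, c i = ∑ i ∈ Finset.Icc lo (max h1 h2), c i :=
    Finset.sum_subset (Finset.Icc_subset_Icc_right (le_max_right _ _))
      (fun x hx hnx => hz2 x (by
        simp only [Finset.mem_Icc] at hx hnx
        omega))
  rw [e1, e2]

lemma coeffId (N : ℕ) (a : ℕ → ℕ → ℂ) (P : ℕ → Polynomial ℂ) (lam : ℕ → ℂ)
    (hL : ∀ n, ∑ i ∈ Finset.Icc 1 N,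
        (∑ j ∈ Finset.range (i + 1), Polynomial.C (a i j) * Polynomial.X ^ j) *
          (⇑Polynomial.derivative)^[i] (P n) = Polynomial.C (lam n) * P n)
    (r m : ℕ) :
    ∑ i ∈ Finset.Icc 1 N, ∑ l ∈ Finset.range (i + 1),
      a i (i - l) * ((m + l).descFactorial i : ℂ) * (P r).coeff (m + l)
      = lam r * (P r).coeff m := by
  have h := congrArg (fun p => Polynomial.coeff p m) (hL r)
  simp only [Polynomial.finset_sum_coeff, Polynomial.coeff_C_mul] at h
  rw [← h]
  apply Finset.sum_congr rfl
  intro i _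
  rw [Finset.sum_mul, Polynomial.finset_sum_coeff]
  conv_rhs => rw [← Finset.sum_range_reflect]
  apply Finset.sum_congr rfl
  intro l hl
  rw [Finset.mem_range] at hl
  have hli : l ≤ i := by omega
  have key : ∀ j : ℕ, (Polynomial.C (a i j) * Polynomial.X ^ j *
      (⇑Polynomial.derivative)^[i] (P r)).coeff m
      = if j ≤ m then a i j * (((m - j + i).descFactorial i : ℕ) : ℂ) * (P r).coeff (m - j + i)
        else 0 := by
    intro j
    rw [mul_right_comm, Polynomial.coeff_mul_X_pow', Polynomial.coeff_C_mul,
      Polynomial.coeff_iterate_derivative]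
    split_ifs with hj
    · rw [nsmul_eq_mul]; ring
    · rfl
  rw [show i + 1 - 1 - l = i - l by omega, key (i - l)]
  by_cases hc : i - l ≤ m
  · rw [if_pos hc, show m - (i - l) + i = m + l by omega]
  · rw [if_neg hc]
    have : (m + l).descFactorial i = 0 := by
      rw [Nat.descFactorial_eq_zero_iff_lt]; omega
    rw [this]
    push_cast
    ring

lemma lemC (N : ℕ) (a : ℕ → ℕ → ℂ) (P : ℕ → Polynomial ℂ) (lam : ℕ → ℂ)
    (hA : ∀ r m : ℕ,
      ∑ i ∈ Finset.Icc 1 N, ∑ l ∈ Finset.range (i + 1),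
        a i (i - l) * ((m + l).descFactorial i : ℂ) * (P r).coeff (m + l)
      = lam r * (P r).coeff m)
    (r m : ℕ) :
    (∑ i ∈ Finset.Icc 1 N, a i i * (m.descFactorial i : ℂ)) * (P r).coeff m
      + ∑ l ∈ Finset.Icc 1 N, (∑ i ∈ Finset.Icc (max 1 l) N,
          a i (i - l) * (((m + l).descFactorial i : ℕ) : ℂ)) * (P r).coeff (m + l)
      = lam r * (P r).coeff m := by
  rw [← hA r m]
  rw [Finset.sum_comm' (t' := Finset.range (N + 1))
    (s' := fun l => Finset.Icc (max 1 l) N)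
    (by intro x y; simp only [Finset.mem_Icc, Finset.mem_range, Finset.mem_Icc,
        max_le_iff]; omega)]
  rw [show Finset.range (N + 1) = insert 0 (Finset.Icc 1 N) by
    ext x; simp [Finset.mem_Icc, Finset.mem_range]; omega]
  rw [Finset.sum_insert (by simp)]
  congr 1
  · rw [Finset.sum_mul]
    apply Finset.sum_congr (by norm_num)
    intro i _
    simp only [Nat.add_zero, Nat.sub_zero]
    try ring
  · apply Finset.sum_congr rfl
    intro l _
    rw [Finset.sum_mul]

lemma detPart {k : ℕ} (hk : 1 ≤ k) (b : ℕ → ℕ → ℂ) (m : ℕ)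
    (hb1 : ∀ r, b r r = 1) (hb0 : ∀ r i, r < i → b r i = 0) (w : ℕ → ℂ) :
    Matrix.det ((Matrix.of fun i j : Fin k => b (m + (j : ℕ) + 1) (m + (i : ℕ))).updateRow
        ⟨0, by omega⟩
        (fun j => ∑ l ∈ Finset.Icc 1 k, w l * b (m + (j : ℕ) + 1) (m + l)))
      = w k * (-1) ^ (k - 1) := by
  obtain ⟨k', rfl⟩ : ∃ k', k = k' + 1 := ⟨k - 1, by omega⟩
  set M0 : Matrix (Fin (k' + 1)) (Fin (k' + 1)) ℂ :=
    Matrix.of fun i j : Fin (k' + 1) => b (m + (j : ℕ) + 1) (m + (i : ℕ)) with hM0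
  have hz : (⟨0, by omega⟩ : Fin (k' + 1)) = 0 := rfl
  rw [hz]
  have hrow : (fun j : Fin (k' + 1) => ∑ l ∈ Finset.Icc 1 (k' + 1),
        w l * b (m + (j : ℕ) + 1) (m + l))
      = ∑ l ∈ Finset.Icc 1 (k' + 1),
          w l • (fun j : Fin (k' + 1) => b (m + (j : ℕ) + 1) (m + l)) := by
    funext j
    rw [Finset.sum_apply]
    rfl
  rw [hrow, detRow_sum']
  have hdetl : ∀ l, 1 ≤ l → l < k' + 1 →
      (M0.updateRow 0 (fun j : Fin (k' + 1) => b (m + (j : ℕ) + 1) (m + l))).det = 0 := by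
    intro l hl1 hlk
    apply Matrix.det_zero_of_row_eq (i := (0 : Fin (k' + 1))) (j := ⟨l, hlk⟩)
    · intro h
      have := congrArg Fin.val h
      simp at this
      omega
    · funext j
      rw [Matrix.updateRow_self, Matrix.updateRow_ne (by
        intro h
        have := congrArg Fin.val h
        simp at this
        omega)]
      rfl
  have hdetk : (M0.updateRow 0 (fun j : Fin (k' + 1) =>
      b (m + (j : ℕ) + 1) (m + (k' + 1)))).det = (-1) ^ k' := by
    set Mk := M0.updateRow 0 (fun j : Fin (k' + 1) => b (m + (j : ℕ) + 1) (m + (k' + 1)))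
      with hMk
    have hsub : Mk.submatrix (finRotate (k' + 1)) id
        = Matrix.of (fun i j : Fin (k' + 1) => b (m + (j : ℕ) + 1) (m + (i : ℕ) + 1)) := by
      ext i j
      rw [Matrix.submatrix_apply, finRotate_succ_apply, id]
      by_cases hi : (i : ℕ) = k'
      · have h0 : i + 1 = 0 := by
          have : i = Fin.last k' := by
            apply Fin.ext; simp [hi]
          rw [this, Fin.last_add_one]
        rw [h0, hMk, Matrix.updateRow_self]
        simp only [Matrix.of_apply, hi, ← add_assoc]
      · have hval : ((i + 1 : Fin (k' + 1)) : ℕ) = (i : ℕ) + 1 := by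
          rw [Fin.val_add_one]
          split_ifs with h
          · exact absurd (congrArg Fin.val h) (by simp; omega)
          · rfl
        have hne : i + 1 ≠ 0 := by
          intro h
          have := congrArg Fin.val h
          rw [hval] at this
          simp at this
        rw [hMk, Matrix.updateRow_ne hne]
        simp only [hM0, Matrix.of_apply, hval, ← add_assoc]
    have htri : (Matrix.of (fun i j : Fin (k' + 1) =>
        b (m + (j : ℕ) + 1) (m + (i : ℕ) + 1))).det = 1 := by
      rw [Matrix.det_of_upperTriangular]
      · apply Finset.prod_eq_one
        intro i _
        simp only [Matrix.of_apply]
        exact hb1 _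
      · intro i j hij
        simp only [Matrix.of_apply]
        apply hb0
        have : (j : ℕ) < (i : ℕ) := hij
        omega
    have hperm := Matrix.det_permute (finRotate (k' + 1)) Mk
    rw [hsub, htri] at hperm
    have hsign : ((Equiv.Perm.sign (finRotate (k' + 1)) : ℤ) : ℂ) = (-1) ^ k' := by
      rw [sign_finRotate]
      simp
    rw [hsign] at hperm
    have h2 : ((-1 : ℂ) ^ k') * 1 = ((-1 : ℂ) ^ k') * ((-1 : ℂ) ^ k' * Mk.det) := by
      rw [← hperm]
    rw [← mul_assoc, ← pow_add, ← two_mul, pow_mul] at h2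
    simpa using h2.symm
  rw [Finset.sum_eq_single (k' + 1)]
  · rw [Matrix.det_updateRow_smul, hdetk]
    simp
  · intro l hl hne
    rw [Finset.mem_Icc] at hl
    rw [Matrix.det_updateRow_smul, hdetl l hl.1 (by omega)]
    ring
  · intro h
    exact absurd (Finset.mem_Icc.mpr ⟨by omega, le_refl _⟩) h

theorem stmt_6 (N : ℕ) (hN : 1 ≤ N) (a : ℕ → ℕ → ℂ)
    (ha : ∀ i j : ℕ, (N < i ∨ i < j) → a i j = 0) (ha0 : a 0 0 = 0)
    (P : ℕ → Polynomial ℂ) (hmonic : ∀ n, (P n).Monic)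
    (hdeg : ∀ n, (P n).natDegree = n)
    (lam : ℕ → ℂ) (hlam0 : lam 0 = 0)
    (hL : ∀ n, ∑ i ∈ Finset.Icc 1 N,
        (∑ j ∈ Finset.range (i + 1), Polynomial.C (a i j) * Polynomial.X ^ j) *
          (⇑Polynomial.derivative)^[i] (P n) = Polynomial.C (lam n) * P n)
    (n k : ℕ) (hn : 1 ≤ n) (hk1 : 1 ≤ k) (hkn : k ≤ n) :
    (-1 : ℂ) ^ (k + 1) * (∑ i ∈ Finset.Icc k n, (n.choose i * i.factorial : ℂ) * a i (i - k)) =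
      ∑ s ∈ Finset.Icc 1 n,
        DeltaDet (fun m i => (P m).coeff i) k n s * (s.factorial : ℂ) * a s s := by
  have hb1 : ∀ r, (P r).coeff r = 1 := by
    intro r
    have h := (hmonic r).coeff_natDegree
    rwa [hdeg] at h
  have hb0 : ∀ r i : ℕ, r < i → (P r).coeff i = 0 := by
    intro r i h
    exact Polynomial.coeff_eq_zero_of_natDegree_lt (by rw [hdeg]; exact h)
  have hA := coeffId N a P lam hL
  have hC := lemC N a P lam hA
  -- lam r equals the explicit eigenvalue formula
  have hlam : ∀ r, lam r = ∑ i ∈ Finset.Icc 1 N, a i i * (r.descFactorial i : ℂ) := by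
    intro r
    have h := hC r r
    rw [hb1 r] at h
    have hzz : ∑ l ∈ Finset.Icc 1 N, (∑ i ∈ Finset.Icc (max 1 l) N,
        a i (i - l) * (((r + l).descFactorial i : ℕ) : ℂ)) * (P r).coeff (r + l) = 0 := by
      apply Finset.sum_eq_zero
      intro l hl
      rw [Finset.mem_Icc] at hl
      rw [hb0 r (r + l) (by omega), mul_zero]
    rw [hzz] at h
    simpa using h.symm
  -- the eigenvalue formula in terms of binomial coefficients
  have hchoose : ∀ r : ℕ, r ≤ n →
      ∑ s ∈ Finset.Icc 1 n, (s.factorial : ℂ) * a s s * (r.choose s : ℂ)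
        = ∑ i ∈ Finset.Icc 1 N, a i i * (r.descFactorial i : ℂ) := by
    intro r hr
    rw [sum_trunc (fun s => (s.factorial : ℂ) * a s s * (r.choose s : ℂ)) 1 n N
      (fun s hs => by
        show (s.factorial : ℂ) * a s s * (r.choose s : ℂ) = 0
        rw [Nat.choose_eq_zero_of_lt (by omega)]
        push_cast
        ring)
      (fun s hs => by
        show (s.factorial : ℂ) * a s s * (r.choose s : ℂ) = 0
        rw [ha s s (Or.inl hs)]
        ring)]
    apply Finset.sum_congr rfl
    intro s _
    rw [Nat.descFactorial_eq_factorial_mul_choose]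
    push_cast
    ring
  -- the row identity from the eigenvalue equation
  have hrowid : ∀ j : ℕ, j < k →
      ((∑ i ∈ Finset.Icc 1 N, a i i * ((n - k + j + 1).descFactorial i : ℂ))
        - (∑ i ∈ Finset.Icc 1 N, a i i * ((n - k).descFactorial i : ℂ)))
          * (P (n - k + j + 1)).coeff (n - k)
      = ∑ l ∈ Finset.Icc 1 k, (∑ i ∈ Finset.Icc (max 1 l) N,
          a i (i - l) * ((n - k + l).descFactorial i : ℂ))
            * (P (n - k + j + 1)).coeff (n - k + l) := by
    intro j hj
    have h := hC (n - k + j + 1) (n - k)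
    rw [hlam (n - k + j + 1)] at h
    have htr : ∑ l ∈ Finset.Icc 1 N, (∑ i ∈ Finset.Icc (max 1 l) N,
          a i (i - l) * ((n - k + l).descFactorial i : ℂ))
            * (P (n - k + j + 1)).coeff (n - k + l)
        = ∑ l ∈ Finset.Icc 1 k, (∑ i ∈ Finset.Icc (max 1 l) N,
          a i (i - l) * ((n - k + l).descFactorial i : ℂ))
            * (P (n - k + j + 1)).coeff (n - k + l) := by
      apply sum_trunc
      · intro l hl
        rw [Finset.Icc_eq_empty (by omega : ¬ (max 1 l ≤ N)), Finset.sum_empty, zero_mul]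
      · intro l hl
        rw [hb0 (n - k + j + 1) (n - k + l) (by omega), mul_zero]
    rw [← htr]
    linear_combination -h
  -- restructure DeltaDet as an updateRow determinant
  have hM1 : ∀ s : ℕ, DeltaDet (fun m i => (P m).coeff i) k n s
      = Matrix.det ((Matrix.of fun i j : Fin k =>
          (P (n - k + (j : ℕ) + 1)).coeff (n - k + (i : ℕ))).updateRow ⟨0, by omega⟩
          (fun j : Fin k =>
            (∑ t ∈ Finset.range ((j : ℕ) + 1), ((n - k + t).choose (s - 1) : ℂ)) *
              (P (n - k + (j : ℕ) + 1)).coeff (n - k))) := by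
    intro s
    unfold DeltaDet
    congr 1
    ext i j
    rw [Matrix.updateRow_apply]
    by_cases h : i = (⟨0, by omega⟩ : Fin k)
    · rw [if_pos h, Matrix.of_apply, if_pos (by rw [h])]
    · rw [if_neg h, Matrix.of_apply,
        if_neg (fun hc => h (Fin.ext hc)), Matrix.of_apply]
      split_ifs with h1 h2
      · rw [show n - k + (i : ℕ) = n - k + (j : ℕ) + 1 by omega]
        exact (hb1 _).symm
      · exact (hb0 _ _ (by omega)).symm
      · rfl
  -- main computation
  have main : ∑ s ∈ Finset.Icc 1 n,
      DeltaDet (fun m i => (P m).coeff i) k n s * (s.factorial : ℂ) * a s s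
      = (∑ i ∈ Finset.Icc (max 1 k) N,
          a i (i - k) * ((n - k + k).descFactorial i : ℂ)) * (-1) ^ (k - 1) := by
    calc ∑ s ∈ Finset.Icc 1 n,
        DeltaDet (fun m i => (P m).coeff i) k n s * (s.factorial : ℂ) * a s s
        = ∑ s ∈ Finset.Icc 1 n, Matrix.det ((Matrix.of fun i j : Fin k =>
            (P (n - k + (j : ℕ) + 1)).coeff (n - k + (i : ℕ))).updateRow ⟨0, by omega⟩
            (((s.factorial : ℂ) * a s s) • (fun j : Fin k =>
              (∑ t ∈ Finset.range ((j : ℕ) + 1), ((n - k + t).choose (s - 1) : ℂ)) *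
                (P (n - k + (j : ℕ) + 1)).coeff (n - k)))) := by
          apply Finset.sum_congr rfl
          intro s _
          rw [hM1 s, Matrix.det_updateRow_smul]
          ring
      _ = Matrix.det ((Matrix.of fun i j : Fin k =>
            (P (n - k + (j : ℕ) + 1)).coeff (n - k + (i : ℕ))).updateRow ⟨0, by omega⟩
            (∑ s ∈ Finset.Icc 1 n, ((s.factorial : ℂ) * a s s) • (fun j : Fin k =>
              (∑ t ∈ Finset.range ((j : ℕ) + 1), ((n - k + t).choose (s - 1) : ℂ)) *
                (P (n - k + (j : ℕ) + 1)).coeff (n - k)))) :=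
          (detRow_sum' _ _ _ _).symm
      _ = Matrix.det ((Matrix.of fun i j : Fin k =>
            (P (n - k + (j : ℕ) + 1)).coeff (n - k + (i : ℕ))).updateRow ⟨0, by omega⟩
            (fun j : Fin k => ∑ l ∈ Finset.Icc 1 k, (∑ i ∈ Finset.Icc (max 1 l) N,
              a i (i - l) * ((n - k + l).descFactorial i : ℂ))
                * (P (n - k + (j : ℕ) + 1)).coeff (n - k + l))) := by
          have hfun : (∑ s ∈ Finset.Icc 1 n, ((s.factorial : ℂ) * a s s) • (fun j : Fin k =>
              (∑ t ∈ Finset.range ((j : ℕ) + 1), ((n - k + t).choose (s - 1) : ℂ)) *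
                (P (n - k + (j : ℕ) + 1)).coeff (n - k)))
              = (fun j : Fin k => ∑ l ∈ Finset.Icc 1 k, (∑ i ∈ Finset.Icc (max 1 l) N,
                a i (i - l) * ((n - k + l).descFactorial i : ℂ))
                  * (P (n - k + (j : ℕ) + 1)).coeff (n - k + l)) := by
            funext j
            have hjk : (j : ℕ) < k := j.isLt
            rw [Finset.sum_apply]
            simp only [Pi.smul_apply, smul_eq_mul]
            have e1 : ∑ s ∈ Finset.Icc 1 n, (s.factorial : ℂ) * a s s *
                ((∑ t ∈ Finset.range ((j : ℕ) + 1), ((n - k + t).choose (s - 1) : ℂ)) *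
                  (P (n - k + (j : ℕ) + 1)).coeff (n - k))
                = ∑ s ∈ Finset.Icc 1 n,
                  ((s.factorial : ℂ) * a s s * ((n - k + (j : ℕ) + 1).choose s : ℂ)
                      * (P (n - k + (j : ℕ) + 1)).coeff (n - k)
                    - (s.factorial : ℂ) * a s s * ((n - k).choose s : ℂ)
                      * (P (n - k + (j : ℕ) + 1)).coeff (n - k)) := by
              apply Finset.sum_congr rfl
              intro s hs
              rw [Finset.mem_Icc] at hs
              rw [hockey (n - k) s hs.1 (j : ℕ)]
              ring
            rw [e1, Finset.sum_sub_distrib, ← Finset.sum_mul, ← Finset.sum_mul,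
              hchoose (n - k + (j : ℕ) + 1) (by omega), hchoose (n - k) (by omega)]
            linear_combination hrowid (j : ℕ) hjk
          rw [hfun]
      _ = (∑ i ∈ Finset.Icc (max 1 k) N,
            a i (i - k) * ((n - k + k).descFactorial i : ℂ)) * (-1) ^ (k - 1) :=
          detPart hk1 (fun r i => (P r).coeff i) (n - k) hb1 hb0
            (fun l => ∑ i ∈ Finset.Icc (max 1 l) N,
              a i (i - l) * ((n - k + l).descFactorial i : ℂ))
  rw [main]
  rw [show max 1 k = k from max_eq_right hk1, show n - k + k = n from by omega]
  have hL2 : ∑ i ∈ Finset.Icc k n, (n.choose i * i.factorial : ℂ) * a i (i - k)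
      = ∑ i ∈ Finset.Icc k N, a i (i - k) * (n.descFactorial i : ℂ) := by
    rw [sum_trunc (fun i => (n.choose i * i.factorial : ℂ) * a i (i - k)) k n N
      (fun i hi => by
        show (n.choose i * i.factorial : ℂ) * a i (i - k) = 0
        rw [Nat.choose_eq_zero_of_lt (by omega)]
        push_cast
        ring)
      (fun i hi => by
        show (n.choose i * i.factorial : ℂ) * a i (i - k) = 0
        rw [ha i (i - k) (Or.inl hi)]
        ring)]
    apply Finset.sum_congr rfl
    intro i _
    rw [Nat.descFactorial_eq_factorial_mul_choose]
    push_cast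
    ring
  rw [hL2]
  have hpow : (-1 : ℂ) ^ (k + 1) = (-1) ^ (k - 1) := by
    rw [show k + 1 = (k - 1) + 2 by omega, pow_add]
    norm_num
  rw [hpow]
  ring
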